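/- Fix real numbers 0 < x₁ < x₃ < x₂ < x₄ and 0 < s₄ < s₁ < s₃ < s₂, and let G be the 4×4 matrix with entries G_{ij} = (x_i ∧ x_j)(s_i ∧ s_j). Then G is invertible and the (1,2) entry of G⁻¹ is strictly positive; in particular G⁻¹ is not an M-matrix. -/
import Mathlib

set_option maxHeartbeats 1600000

private lemma det_fin_four (M : Matrix (Fin 4) (Fin 4) ℝ) :
    M.det =
      M 0 0 * (M 1 1 * (M 2 2 * M 3 3 - M 2 3 * M 3 2) - M 1 2 * (M 2 1 * M 3 3 - M 2 3 * M 3 1)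
        + M 1 3 * (M 2 1 * M 3 2 - M 2 2 * M 3 1))
      - M 0 1 * (M 1 0 * (M 2 2 * M 3 3 - M 2 3 * M 3 2) - M 1 2 * (M 2 0 * M 3 3 - M 2 3 * M 3 0)
        + M 1 3 * (M 2 0 * M 3 2 - M 2 2 * M 3 0))
      + M 0 2 * (M 1 0 * (M 2 1 * M 3 3 - M 2 3 * M 3 1) - M 1 1 * (M 2 0 * M 3 3 - M 2 3 * M 3 0)
        + M 1 3 * (M 2 0 * M 3 1 - M 2 1 * M 3 0))
      - M 0 3 * (M 1 0 * (M 2 1 * M 3 2 - M 2 2 * M 3 1) - M 1 1 * (M 2 0 * M 3 2 - M 2 2 * M 3 0)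
        + M 1 2 * (M 2 0 * M 3 1 - M 2 1 * M 3 0)) := by
  simp [Matrix.det_succ_row_zero, Fin.sum_univ_succ, Fin.succAbove,
    show (Fin.succ 2 : Fin 4) = 3 from rfl, show ((2 : Fin 3).castSucc : Fin 4) = 2 from rfl,
    show (1 : Fin 4) < 3 from by decide]
  ring

private lemma detpos (a u v w p e f g : ℝ) (ha : 0 < a) (hu : 0 < u) (hv : 0 < v)
    (hw : 0 < w) (hp : 0 < p) (he : 0 < e) (hf : 0 < f) (hg : 0 < g) :
    0 < a * p * (((a+u+v)*(p+e+f+g) - (a+u)*(p+e+f)) * ((a+u)*(p+e+f) - a*(p+e)) *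
      ((a+u+v+w)*(p+e) - a*p) - (p+e)*p*(((a+u+v)*(p+e+f+g) - (a+u)*(p+e+f))*u^2 +
      v^2*((a+u)*(p+e+f) - a*(p+e)))) := by
  have h : a * p * (((a+u+v)*(p+e+f+g) - (a+u)*(p+e+f)) * ((a+u)*(p+e+f) - a*(p+e)) *
      ((a+u+v+w)*(p+e) - a*p) - (p+e)*p*(((a+u+v)*(p+e+f+g) - (a+u)*(p+e+f))*u^2 +
      v^2*((a+u)*(p+e+f) - a*(p+e)))) = a*u*v*w*p*e*f*g + a*u*v*w*p*e*f^2 + a*u*v*w*p*e^2*g + 2*a*u*v*w*p*e^2*f + a*u*v*w*p*e^3 + a*u*v*w*p^2*f*g + a*u*v*w*p^2*f^2 + 2*a*u*v*w*p^2*e*g + 4*a*u*v*w*p^2*e*f + 3*a*u*v*w*p^2*e^2 + a*u*v*w*p^3*g + 2*a*u*v*w*p^3*f + 3*a*u*v*w*p^3*e + a*u*v*w*p^4 + a*u*v^2*p*e*f*g + a*u*v^2*p*e*f^2 + a*u*v^2*p*e^2*g + 2*a*u*v^2*p*e^2*f + a*u*v^2*p*e^3 + a*u*v^2*p^2*f*g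 + a*u*v^2*p^2*f^2 + 2*a*u*v^2*p^2*e*g + 3*a*u*v^2*p^2*e*f + 2*a*u*v^2*p^2*e^2 + a*u*v^2*p^3*g + a*u*v^2*p^3*f + a*u*v^2*p^3*e + a*u^2*w*p*e*f*g + a*u^2*w*p*e^2*g + a*u^2*w*p^2*f*g + 2*a*u^2*w*p^2*e*g + a*u^2*w*p^3*g + 2*a*u^2*v*p*e*f*g + a*u^2*v*p*e*f^2 + 2*a*u^2*v*p*e^2*g + 2*a*u^2*v*p*e^2*f + a*u^2*v*p*e^3 + 2*a*u^2*v*p^2*f*g + a*u^2*v*p^2*f^2 + 3*a*u^2*v*p^2*e*g + 3*a*u^2*v*p^2*e*f + 2*a*u^2*v*p^2*e^2 + a*u^2*v*p^3*g + a*u^2*v*p^3*f + a*u^2*v*p^3*e + a*u^3*p*e*f*g + a*u^3*p*e^2*g + a*u^3*p^2*f*g + a*u^3*p^2*e*g + a^2*v*w*p*e*f*g + a^2*v*w*p*e*f^2 + a^2*v*w*p*e^2*f + a^2*v*w*p^2*f*g + a^2*v*w*p^2*f^2 + 2*a^2*v*w*p^2*e*f + a^2*v*w*p^3*f + a^2*v^2*p*e*f*g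 + a^2*v^2*p*e*f^2 + a^2*v^2*p*e^2*f + a^2*v^2*p^2*f*g + a^2*v^2*p^2*f^2 + a^2*v^2*p^2*e*f + 2*a^2*u*w*p*e*f*g + a^2*u*w*p*e^2*g + 2*a^2*u*w*p^2*f*g + 2*a^2*u*w*p^2*e*g + a^2*u*w*p^3*g + 4*a^2*u*v*p*e*f*g + 2*a^2*u*v*p*e*f^2 + 2*a^2*u*v*p*e^2*g + 3*a^2*u*v*p*e^2*f + a^2*u*v*p*e^3 + 3*a^2*u*v*p^2*f*g + a^2*u*v*p^2*f^2 + 3*a^2*u*v*p^2*e*g + 4*a^2*u*v*p^2*e*f + 2*a^2*u*v*p^2*e^2 + a^2*u*v*p^3*g + a^2*u*v*p^3*f + a^2*u*v*p^3*e + 3*a^2*u^2*p*e*f*g + 2*a^2*u^2*p*e^2*g + 2*a^2*u^2*p^2*f*g + 2*a^2*u^2*p^2*e*g + a^3*w*p*e*f*g + a^3*w*p^2*f*g + 2*a^3*v*p*e*f*g + a^3*v*p*e*f^2 + a^3*v*p*e^2*f + a^3*v*p^2*f*g + a^3*v*p^2*e*f + 3*a^3*u*p*e*f*g + a^3*u*p*e^2*g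 + a^3*u*p^2*f*g + a^3*u*p^2*e*g + a^4*p*e*f*g := by ring
  rw [h]
  positivity

/-- An `M`-matrix: nonpositive off-diagonal entries, nonsingular,
with entrywise nonnegative inverse. -/
def IsMMatrix (A : Matrix (Fin 4) (Fin 4) ℝ) : Prop :=
  (∀ i j, i ≠ j → A i j ≤ 0) ∧ IsUnit A.det ∧ ∀ i j, 0 ≤ A⁻¹ i j

/-- The covariance matrix of the Brownian sheet at four points
`(xᵢ, sᵢ)` with `0 < x₁ < x₃ < x₂ < x₄` and `0 < s₄ < s₁ < s₃ < s₂`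
is invertible, the `(1,2)` entry of its inverse is strictly positive,
and hence its inverse is not an `M`-matrix. -/
theorem brownian_sheet_not_mMatrix (x s : Fin 4 → ℝ)
    (hx0 : 0 < x 0) (hx1 : x 0 < x 2) (hx2 : x 2 < x 1) (hx3 : x 1 < x 3)
    (hs0 : 0 < s 3) (hs1 : s 3 < s 0) (hs2 : s 0 < s 2) (hs3 : s 2 < s 1)
    (G : Matrix (Fin 4) (Fin 4) ℝ)
    (hG : ∀ i j, G i j = min (x i) (x j) * min (s i) (s j)) :
    IsUnit G.det ∧ 0 < G⁻¹ 0 1 ∧ ¬ IsMMatrix G⁻¹ := by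
  have h00 : G 0 0 = x 0 * s 0 := by rw [hG]; rw [min_self, min_self]
  have h01 : G 0 1 = x 0 * s 0 := by
    rw [hG, min_eq_left (by linarith), min_eq_left (by linarith)]
  have h02 : G 0 2 = x 0 * s 0 := by
    rw [hG, min_eq_left (by linarith), min_eq_left (by linarith)]
  have h03 : G 0 3 = x 0 * s 3 := by
    rw [hG, min_eq_left (by linarith), min_eq_right (by linarith)]
  have h10 : G 1 0 = x 0 * s 0 := by
    rw [hG, min_eq_right (by linarith), min_eq_right (by linarith)]
  have h11 : G 1 1 = x 1 * s 1 := by rw [hG]; rw [min_self, min_self]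
  have h12 : G 1 2 = x 2 * s 2 := by
    rw [hG, min_eq_right (by linarith), min_eq_right (by linarith)]
  have h13 : G 1 3 = x 1 * s 3 := by
    rw [hG, min_eq_left (by linarith), min_eq_right (by linarith)]
  have h20 : G 2 0 = x 0 * s 0 := by
    rw [hG, min_eq_right (by linarith), min_eq_right (by linarith)]
  have h21 : G 2 1 = x 2 * s 2 := by
    rw [hG, min_eq_left (by linarith), min_eq_left (by linarith)]
  have h22 : G 2 2 = x 2 * s 2 := by rw [hG]; rw [min_self, min_self]
  have h23 : G 2 3 = x 2 * s 3 := by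
    rw [hG, min_eq_left (by linarith), min_eq_right (by linarith)]
  have h30 : G 3 0 = x 0 * s 3 := by
    rw [hG, min_eq_right (by linarith), min_eq_left (by linarith)]
  have h31 : G 3 1 = x 1 * s 3 := by
    rw [hG, min_eq_right (by linarith), min_eq_left (by linarith)]
  have h32 : G 3 2 = x 2 * s 3 := by
    rw [hG, min_eq_right (by linarith), min_eq_left (by linarith)]
  have h33 : G 3 3 = x 3 * s 3 := by rw [hG]; rw [min_self, min_self]
  have key := detpos (x 0) (x 2 - x 0) (x 1 - x 2) (x 3 - x 1) (s 3) (s 0 - s 3)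
    (s 2 - s 0) (s 1 - s 2) hx0 (by linarith) (by linarith) (by linarith) hs0
    (by linarith) (by linarith) (by linarith)
  have hdet : 0 < G.det := by
    rw [det_fin_four, h00, h01, h02, h03, h10, h11, h12, h13, h20, h21, h22,
      h23, h30, h31, h32, h33]
    nlinarith [key]
  have hunit : IsUnit G.det := isUnit_iff_ne_zero.mpr hdet.ne'
  have hadj : G.adjugate 0 1 = x 0 * x 2 * (s 3)^2 * (x 1 - x 2) * (s 2 - s 0) := by
    set U := G.updateRow 1 (Pi.single 0 1) with hU
    have u10 : U 1 0 = 1 := by simp [hU, Pi.single_apply]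
    have u11 : U 1 1 = 0 := by simp [hU, Pi.single_apply]
    have u12 : U 1 2 = 0 := by simp [hU, Pi.single_apply]
    have u13 : U 1 3 = 0 := by simp [hU, Pi.single_apply]
    have u0 : ∀ j, U 0 j = G 0 j := fun j => by
      rw [hU, Matrix.updateRow_ne (by decide)]
    have u2 : ∀ j, U 2 j = G 2 j := fun j => by
      rw [hU, Matrix.updateRow_ne (by decide)]
    have u3 : ∀ j, U 3 j = G 3 j := fun j => by
      rw [hU, Matrix.updateRow_ne (by decide)]
    rw [Matrix.adjugate_apply, ← hU, det_fin_four, u10, u11, u12, u13, u0, u0, u0, u0,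
      u2, u2, u2, u2, u3, u3, u3, u3, h00, h01, h02, h03, h20, h21, h22, h23,
      h30, h31, h32, h33]
    ring
  have hadjpos : 0 < G.adjugate 0 1 := by
    rw [hadj]
    have p1 : 0 < x 2 := by linarith
    have p2 : 0 < x 1 - x 2 := by linarith
    have p3 : 0 < s 2 - s 0 := by linarith
    have p4 : 0 < s 3 ^ 2 := by positivity
    exact mul_pos (mul_pos (mul_pos (mul_pos hx0 p1) p4) p2) p3
  have hinv : 0 < G⁻¹ 0 1 := by
    rw [Matrix.inv_def]
    simp only [Matrix.smul_apply, smul_eq_mul, Ring.inverse_eq_inv']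
    exact mul_pos (inv_pos.mpr hdet) hadjpos
  refine ⟨hunit, hinv, fun h => ?_⟩
  have := h.1 0 1 (by decide)
  linarith
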